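/- Let R and S be finite-valued random variables on a probability space such that the pair (R,S) is trivial, let φ and ψ be deterministic functions on the ranges of R and S respectively, and let δ ≥ 0 satisfy I[R ; ψ ∘ S | φ ∘ R] + I[S ; φ ∘ R | ψ ∘ S] ≤ δ. Then there exists a finite-valued random variable Z on the same probability space such that I[φ ∘ R ; ψ ∘ S | Z] = 0 and I[Z ; φ ∘ R | ψ ∘ S] + I[Z ; ψ ∘ S | φ ∘ R] ≤ δ. -/

import Mathlib

open MeasureTheory Real
open scoped ENNReal

set_option linter.unusedSectionVars false
set_option linter.unusedVariables false

namespace SecureComputation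

variable {Ω : Type*} [MeasurableSpace Ω]

/-- The pair random variable `⟨X,Y⟩`. -/
def pair {𝒳 𝒴 : Type*} (X : Ω → 𝒳) (Y : Ω → 𝒴) : Ω → 𝒳 × 𝒴 := fun ω => (X ω, Y ω)

/-- Shannon entropy `H[X]` of a finite-valued random variable. -/
noncomputable def ent {𝒳 : Type*} (μ : Measure Ω) (X : Ω → 𝒳) : ℝ :=
  ∑' x : 𝒳, negMulLog ((μ (X ⁻¹' {x})).toReal)

/-- Mutual information `I[X;Y]`. -/
noncomputable def mi {𝒳 𝒴 : Type*} (μ : Measure Ω) (X : Ω → 𝒳) (Y : Ω → 𝒴) : ℝ :=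
  ent μ X + ent μ Y - ent μ (pair X Y)

/-- Conditional mutual information `I[X;Y|Z]`. -/
noncomputable def cmi {𝒳 𝒴 𝒵 : Type*} (μ : Measure Ω) (X : Ω → 𝒳) (Y : Ω → 𝒴)
    (Z : Ω → 𝒵) : ℝ :=
  ent μ (pair X Z) + ent μ (pair Y Z) - ent μ (pair (pair X Y) Z) - ent μ Z

/-- Conditional entropy `H[X|Y]`. -/
noncomputable def condEnt {𝒳 𝒴 : Type*} (μ : Measure Ω) (X : Ω → 𝒳) (Y : Ω → 𝒴) : ℝ :=
  ent μ (pair X Y) - ent μ Y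

/-- A finite-valued random variable: preimages of points are measurable. -/
def DiscreteRV {𝒳 : Type*} (X : Ω → 𝒳) : Prop := ∀ x, MeasurableSet (X ⁻¹' {x})

/-- The pair `(X,Y)` is trivial: some finite-valued `Z` on the same space has
`I[X;Y|Z] = 0`, `I[Z;X|Y] = 0`, `I[Z;Y|X] = 0`. -/
def IsTrivialPair {𝒳 𝒴 : Type*} (μ : Measure Ω) (X : Ω → 𝒳) (Y : Ω → 𝒴) : Prop :=
  ∃ (𝒵 : Type) (_ : Fintype 𝒵) (Z : Ω → 𝒵), DiscreteRV Z ∧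
    cmi μ X Y Z = 0 ∧ cmi μ Z X Y = 0 ∧ cmi μ Z Y X = 0

section Helpers

variable {𝒳 𝒴 𝒵 𝒲 : Type*} {μ : Measure Ω}

lemma pair_preimage (X : Ω → 𝒳) (Y : Ω → 𝒴) (x : 𝒳) (y : 𝒴) :
    pair X Y ⁻¹' {(x, y)} = X ⁻¹' {x} ∩ Y ⁻¹' {y} := by
  ext ω; simp [pair, Prod.ext_iff]

lemma DiscreteRV.pair' {X : Ω → 𝒳} {Y : Ω → 𝒴} (hX : DiscreteRV X) (hY : DiscreteRV Y) :
    DiscreteRV (pair X Y) := by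
  rintro ⟨x, y⟩
  rw [pair_preimage]
  exact (hX x).inter (hY y)

lemma DiscreteRV.comp [Countable 𝒳] {X : Ω → 𝒳} (hX : DiscreteRV X) (f : 𝒳 → 𝒴) :
    DiscreteRV (fun ω => f (X ω)) := by
  intro y
  have h : (fun ω => f (X ω)) ⁻¹' {y} = ⋃ x ∈ f ⁻¹' {y}, X ⁻¹' {x} := by
    ext ω; simp
  rw [h]
  exact MeasurableSet.biUnion (Set.to_countable _) fun x _ => hX x

/-- Entropy only depends on the random variable up to pointwise mutual determination. -/
lemma ent_congr {X : Ω → 𝒳} {Y : Ω → 𝒴} (e : 𝒳 → 𝒴) (e' : 𝒴 → 𝒳)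
    (h1 : ∀ ω, e (X ω) = Y ω) (h2 : ∀ ω, e' (Y ω) = X ω) :
    ent μ X = ent μ Y := by
  unfold ent
  have key : ∀ y : 𝒴, (∃ ω, Y ω = y) → Y ⁻¹' {y} = X ⁻¹' {e' y} := by
    rintro y ⟨ω, hω⟩
    ext ω'
    simp only [Set.mem_preimage, Set.mem_singleton_iff]
    constructor
    · intro h; rw [← h2 ω', h]
    · intro h
      have h3 : e (e' y) = y := by rw [← hω, h2, h1]
      rw [← h1 ω', h]
      exact h3
  have supp : ∀ y : 𝒴, negMulLog ((μ (Y ⁻¹' {y})).toReal) ≠ 0 → ∃ ω, Y ω = y := by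
    intro y hy
    by_contra h
    push_neg at h
    have : Y ⁻¹' {y} = ∅ := by
      ext ω; simpa using h ω
    rw [this] at hy
    simp at hy
  apply tsum_eq_tsum_of_ne_zero_bij (fun y => e' y.1) ?_ ?_ ?_
  · rintro ⟨y1, hy1⟩ ⟨y2, hy2⟩ hxy
    obtain ⟨ω1, hω1⟩ := supp y1 hy1
    obtain ⟨ω2, hω2⟩ := supp y2 hy2
    simp only at hxy ⊢
    have r1 : e (e' y1) = y1 := by rw [← hω1, h2, h1]
    have r2 : e (e' y2) = y2 := by rw [← hω2, h2, h1]
    rw [Subtype.mk_eq_mk, ← r1, ← r2, hxy]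
  · intro x hx
    have : ∃ ω, X ω = x := by
      by_contra h
      push_neg at h
      have hemp : X ⁻¹' {x} = ∅ := by ext ω; simpa using h ω
      rw [Function.mem_support, hemp] at hx
      simp at hx
    obtain ⟨ω, hω⟩ := this
    have hy : (∃ ω', Y ω' = e x) := ⟨ω, by rw [← h1, hω]⟩
    have hxe : e' (e x) = x := by rw [← hω, h1, h2]
    have heq : Y ⁻¹' {e x} = X ⁻¹' {x} := by rw [key _ hy, hxe]
    refine ⟨⟨e x, ?_⟩, hxe⟩
    rw [Function.mem_support, heq]
    exact hx
  · rintro ⟨y, hy⟩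
    simp only
    rw [← key y (supp y hy)]

lemma measure_toReal_sum_fiber [IsFiniteMeasure μ] [Fintype 𝒴]
    {A : Set Ω} (hA : MeasurableSet A) {Y : Ω → 𝒴} (hY : DiscreteRV Y) :
    (μ A).toReal = ∑ y, (μ (A ∩ Y ⁻¹' {y})).toReal := by
  rw [← ENNReal.toReal_sum (fun y _ => measure_ne_top μ _)]
  congr 1
  have h1 : A = ⋃ y, A ∩ Y ⁻¹' {y} := by ext ω; simp
  rw [show μ A = μ (⋃ y, A ∩ Y ⁻¹' {y}) by rw [← h1]]
  rw [measure_iUnion ?_ (fun y => hA.inter (hY y))]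
  · exact tsum_fintype _
  · intro a b hab
    apply Set.disjoint_left.mpr
    rintro ω ⟨-, ha⟩ ⟨-, hb⟩
    exact hab (ha.symm.trans hb)

private lemma sum_rot {α β γ : Type*} [Fintype α] [Fintype β] [Fintype γ] (f : α → β → γ → ℝ) :
    ∑ a, ∑ b, ∑ c, f a b c = ∑ c, ∑ a, ∑ b, f a b c :=
  calc ∑ a, ∑ b, ∑ c, f a b c = ∑ a, ∑ c, ∑ b, f a b c :=
        Finset.sum_congr rfl fun _ _ => Finset.sum_comm
    _ = ∑ c, ∑ a, ∑ b, f a b c := Finset.sum_comm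

private lemma neg_sum_mul {𝒴 : Type*} [Fintype 𝒴] (f : 𝒴 → ℝ) (L : ℝ) :
    -(∑ y, f y) * L = ∑ y, -(f y) * L := by
  rw [← Finset.sum_neg_distrib, Finset.sum_mul]

end Helpers

section CMI

variable {𝒳 𝒴 𝒵 : Type*} [Fintype 𝒳] [Fintype 𝒴] [Fintype 𝒵]
  {μ : Measure Ω} [IsProbabilityMeasure μ]
  {X : Ω → 𝒳} {Y : Ω → 𝒴} {Z : Ω → 𝒵}

private noncomputable def p3 (μ : Measure Ω) (X : Ω → 𝒳) (Y : Ω → 𝒴) (Z : Ω → 𝒵)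
    (x : 𝒳) (y : 𝒴) (z : 𝒵) : ℝ := (μ (X ⁻¹' {x} ∩ Y ⁻¹' {y} ∩ Z ⁻¹' {z})).toReal

private noncomputable def p2 (μ : Measure Ω) (X : Ω → 𝒳) (Z : Ω → 𝒵) (x : 𝒳) (z : 𝒵) : ℝ :=
  (μ (X ⁻¹' {x} ∩ Z ⁻¹' {z})).toReal

private noncomputable def p1 (μ : Measure Ω) (Z : Ω → 𝒵) (z : 𝒵) : ℝ := (μ (Z ⁻¹' {z})).toReal

private lemma p3_nonneg (x y z) : 0 ≤ p3 μ X Y Z x y z := ENNReal.toReal_nonneg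
private lemma p2_nonneg (x z) : 0 ≤ p2 μ X Z x z := ENNReal.toReal_nonneg
private lemma p1_nonneg (z) : 0 ≤ p1 μ Z z := ENNReal.toReal_nonneg

private lemma toReal_mono_meas {A B : Set Ω} (h : A ⊆ B) : (μ A).toReal ≤ (μ B).toReal :=
  ENNReal.toReal_mono (measure_ne_top μ _) (measure_mono h)

private lemma p3_le_p2XZ (x y z) : p3 μ X Y Z x y z ≤ p2 μ X Z x z :=
  toReal_mono_meas fun ω => by rintro ⟨⟨h1, h2⟩, h3⟩; exact ⟨h1, h3⟩
private lemma p3_le_p2YZ (x y z) : p3 μ X Y Z x y z ≤ p2 μ Y Z y z :=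
  toReal_mono_meas fun ω => by rintro ⟨⟨h1, h2⟩, h3⟩; exact ⟨h2, h3⟩
private lemma p2_le_p1 (x z) : p2 μ X Z x z ≤ p1 μ Z z :=
  toReal_mono_meas fun ω => by rintro ⟨h1, h2⟩; exact h2

private lemma p2XZ_eq_sum (hX : DiscreteRV X) (hY : DiscreteRV Y) (hZ : DiscreteRV Z) (x z) :
    p2 μ X Z x z = ∑ y, p3 μ X Y Z x y z := by
  rw [p2, measure_toReal_sum_fiber ((hX x).inter (hZ z)) hY]
  exact Finset.sum_congr rfl fun y _ => by rw [p3, Set.inter_right_comm]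

private lemma p2YZ_eq_sum (hX : DiscreteRV X) (hY : DiscreteRV Y) (hZ : DiscreteRV Z) (y z) :
    p2 μ Y Z y z = ∑ x, p3 μ X Y Z x y z := by
  rw [p2, measure_toReal_sum_fiber ((hY y).inter (hZ z)) hX]
  refine Finset.sum_congr rfl fun x _ => ?_
  rw [p3]; congr 2; ext ω
  simp only [Set.mem_inter_iff, Set.mem_preimage, Set.mem_singleton_iff]; tauto

private lemma p1_eq_sumX (hX : DiscreteRV X) (hZ : DiscreteRV Z) (z) :
    p1 μ Z z = ∑ x, p2 μ X Z x z := by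
  rw [p1, measure_toReal_sum_fiber (hZ z) hX]
  exact Finset.sum_congr rfl fun x _ => by rw [p2, Set.inter_comm]

private lemma p1_sum_eq_one (hZ : DiscreteRV Z) : ∑ z, (p1 μ Z z) = 1 := by
  have := measure_toReal_sum_fiber (μ := μ) MeasurableSet.univ hZ
  simp only [Set.univ_inter, measure_univ, ENNReal.toReal_one] at this
  exact this.symm

private lemma E1 : ent μ (pair X Z) = ∑ x, ∑ z, negMulLog (p2 μ X Z x z) := by
  rw [ent, tsum_fintype, Fintype.sum_prod_type]
  exact Finset.sum_congr rfl fun x _ => Finset.sum_congr rfl fun z _ => by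
    rw [pair_preimage, p2]

private lemma E4 : ent μ Z = ∑ z, negMulLog (p1 μ Z z) := by
  rw [ent, tsum_fintype]; rfl

private lemma E3 : ent μ (pair (pair X Y) Z) = ∑ x, ∑ y, ∑ z, negMulLog (p3 μ X Y Z x y z) := by
  rw [ent, tsum_fintype, Fintype.sum_prod_type, Fintype.sum_prod_type]
  exact Finset.sum_congr rfl fun x _ => Finset.sum_congr rfl fun y _ =>
    Finset.sum_congr rfl fun z _ => by rw [pair_preimage, pair_preimage, p3]

/-- Nonnegativity of conditional mutual information (submodularity of entropy). -/
lemma cmi_nonneg (hX : DiscreteRV X) (hY : DiscreteRV Y) (hZ : DiscreteRV Z) :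
    0 ≤ cmi μ X Y Z := by
  classical
  have hXZ := p2XZ_eq_sum (μ := μ) hX hY hZ
  have hYZ := p2YZ_eq_sum (μ := μ) hX hY hZ
  have hZX := p1_eq_sumX (μ := μ) hX hZ
  have hZY := p1_eq_sumX (μ := μ) hY hZ
  have A1 : ∑ x, ∑ z, negMulLog (p2 μ X Z x z)
      = ∑ x, ∑ y, ∑ z, (-(p3 μ X Y Z x y z) * log (p2 μ X Z x z)) := by
    refine Finset.sum_congr rfl fun x _ => ?_
    rw [Finset.sum_comm]
    refine Finset.sum_congr rfl fun z _ => ?_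
    have gen : ∀ L : ℝ, -(p2 μ X Z x z) * L = ∑ y, -(p3 μ X Y Z x y z) * L := by
      intro L; rw [hXZ x z, neg_sum_mul]
    rw [negMulLog]; exact gen _
  have A2 : ∑ y, ∑ z, negMulLog (p2 μ Y Z y z)
      = ∑ x, ∑ y, ∑ z, (-(p3 μ X Y Z x y z) * log (p2 μ Y Z y z)) := by
    have step : ∑ y, ∑ z, negMulLog (p2 μ Y Z y z)
        = ∑ y, ∑ z, ∑ x, (-(p3 μ X Y Z x y z) * log (p2 μ Y Z y z)) := by
      refine Finset.sum_congr rfl fun y _ => Finset.sum_congr rfl fun z _ => ?_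
      have gen : ∀ L : ℝ, -(p2 μ Y Z y z) * L = ∑ x, -(p3 μ X Y Z x y z) * L := by
        intro L; rw [hYZ y z, neg_sum_mul]
      rw [negMulLog]; exact gen _
    exact step.trans (sum_rot (fun y z x => -(p3 μ X Y Z x y z) * log (p2 μ Y Z y z)))
  have A4 : ∑ z, negMulLog (p1 μ Z z)
      = ∑ x, ∑ y, ∑ z, (-(p3 μ X Y Z x y z) * log (p1 μ Z z)) := by
    have step : ∑ z, negMulLog (p1 μ Z z)
        = ∑ z, ∑ x, ∑ y, (-(p3 μ X Y Z x y z) * log (p1 μ Z z)) := by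
      refine Finset.sum_congr rfl fun z _ => ?_
      have hz2 : p1 μ Z z = ∑ x, ∑ y, p3 μ X Y Z x y z := by
        rw [hZX z]; exact Finset.sum_congr rfl fun x _ => hXZ x z
      have gen : ∀ L : ℝ, -(p1 μ Z z) * L = ∑ x, ∑ y, -(p3 μ X Y Z x y z) * L := by
        intro L
        rw [hz2, neg_sum_mul]
        exact Finset.sum_congr rfl fun x _ => neg_sum_mul _ _
      rw [negMulLog]; exact gen _
    exact step.trans ((sum_rot _).trans (sum_rot _))
  have key : cmi μ X Y Z = ∑ x, ∑ y, ∑ z, p3 μ X Y Z x y z *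
      (log (p3 μ X Y Z x y z) + log (p1 μ Z z)
        - log (p2 μ X Z x z) - log (p2 μ Y Z y z)) := by
    rw [cmi, E1 (X := X), E1 (X := Y), E3, E4, A1, A2, A4]
    simp only [negMulLog]
    simp only [← Finset.sum_add_distrib, ← Finset.sum_sub_distrib]
    exact Finset.sum_congr rfl fun x _ => Finset.sum_congr rfl fun y _ =>
      Finset.sum_congr rfl fun z _ => by ring
  have pointwise : ∀ x y z, p3 μ X Y Z x y z - p2 μ X Z x z * p2 μ Y Z y z / p1 μ Z z
      ≤ p3 μ X Y Z x y z * (log (p3 μ X Y Z x y z) + log (p1 μ Z z)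
        - log (p2 μ X Z x z) - log (p2 μ Y Z y z)) := by
    intro x y z
    rcases eq_or_lt_of_le (p3_nonneg (μ := μ) (X := X) (Y := Y) (Z := Z) x y z) with hp | hp
    · have hd : 0 ≤ p2 μ X Z x z * p2 μ Y Z y z / p1 μ Z z :=
        div_nonneg (mul_nonneg (p2_nonneg x z) (p2_nonneg y z)) (p1_nonneg z)
      rw [← hp]; simpa using hd
    · have h1 : 0 < p2 μ X Z x z := lt_of_lt_of_le hp (p3_le_p2XZ x y z)
      have h2 : 0 < p2 μ Y Z y z := lt_of_lt_of_le hp (p3_le_p2YZ x y z)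
      have h3 : 0 < p1 μ Z z := lt_of_lt_of_le h1 (p2_le_p1 x z)
      set a := p3 μ X Y Z x y z with ha
      set b := p2 μ X Z x z with hb
      set c := p2 μ Y Z y z with hc
      set d := p1 μ Z z with hd
      have ht : 0 < b * c / (a * d) := by positivity
      have hlog : log (b * c / (a * d)) ≤ b * c / (a * d) - 1 :=
        log_le_sub_one_of_pos ht
      have hlexp : log (b * c / (a * d)) = log b + log c - log a - log d := by
        rw [log_div (by positivity) (by positivity), log_mul (ne_of_gt h1) (ne_of_gt h2),
          log_mul (ne_of_gt hp) (ne_of_gt h3)]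
        ring
      have hmul0 : a * log (b * c / (a * d)) ≤ a * (b * c / (a * d) - 1) :=
        mul_le_mul_of_nonneg_left hlog hp.le
      have hat : a * (b * c / (a * d)) = b * c / d := by
        field_simp
      have h6 : a * (log b + log c - log a - log d) ≤ b * c / d - a := by
        calc a * (log b + log c - log a - log d) = a * log (b * c / (a * d)) := by
              rw [hlexp]
          _ ≤ a * (b * c / (a * d) - 1) := hmul0
          _ = b * c / d - a := by rw [mul_sub, hat]; ring
      have h7 : a * (log a + log d - log b - log c)
          = -(a * (log b + log c - log a - log d)) := by ring
      linarith
  have hsum1 : ∑ x, ∑ y, ∑ z, p3 μ X Y Z x y z = 1 := by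
    have h0 : ∑ z, ∑ x, ∑ y, p3 μ X Y Z x y z = 1 := by
      rw [← p1_sum_eq_one (μ := μ) hZ]
      refine Finset.sum_congr rfl fun z _ => ?_
      rw [hZX z]
      exact (Finset.sum_congr rfl fun x _ => (hXZ x z)).symm
    calc ∑ x, ∑ y, ∑ z, p3 μ X Y Z x y z
        = ∑ z, ∑ x, ∑ y, p3 μ X Y Z x y z := (sum_rot _)
      _ = 1 := h0
  have hsum2 : ∑ x, ∑ y, ∑ z, p2 μ X Z x z * p2 μ Y Z y z / p1 μ Z z = 1 := by
    have perz : ∀ z, ∑ x, ∑ y, p2 μ X Z x z * p2 μ Y Z y z / p1 μ Z z = p1 μ Z z := by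
      intro z
      by_cases hz : p1 μ Z z = 0
      · have hx0 : ∀ x, p2 μ X Z x z = 0 := fun x =>
          le_antisymm (hz ▸ p2_le_p1 x z) (p2_nonneg x z)
        simp [hx0, hz]
      · have e1 : ∑ x, p2 μ X Z x z = p1 μ Z z := (hZX z).symm
        have e2 : ∑ y, p2 μ Y Z y z = p1 μ Z z := (hZY z).symm
        calc ∑ x, ∑ y, p2 μ X Z x z * p2 μ Y Z y z / p1 μ Z z
            = ∑ x, p2 μ X Z x z * ((∑ y, p2 μ Y Z y z) / p1 μ Z z) := by
              refine Finset.sum_congr rfl fun x _ => ?_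
              rw [Finset.sum_div, Finset.mul_sum]
              exact Finset.sum_congr rfl fun y _ => by ring
          _ = (∑ x, p2 μ X Z x z) * ((∑ y, p2 μ Y Z y z) / p1 μ Z z) := by
              rw [Finset.sum_mul]
          _ = p1 μ Z z := by rw [e1, e2]; field_simp
    calc ∑ x, ∑ y, ∑ z, p2 μ X Z x z * p2 μ Y Z y z / p1 μ Z z
        = ∑ z, ∑ x, ∑ y, p2 μ X Z x z * p2 μ Y Z y z / p1 μ Z z := sum_rot _
      _ = ∑ z, p1 μ Z z := Finset.sum_congr rfl fun z _ => perz z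
      _ = 1 := p1_sum_eq_one (μ := μ) hZ
  have lower : (0 : ℝ) ≤ ∑ x, ∑ y, ∑ z, p3 μ X Y Z x y z *
      (log (p3 μ X Y Z x y z) + log (p1 μ Z z)
        - log (p2 μ X Z x z) - log (p2 μ Y Z y z)) := by
    have hle : ∑ x, ∑ y, ∑ z, (p3 μ X Y Z x y z - p2 μ X Z x z * p2 μ Y Z y z / p1 μ Z z)
        ≤ ∑ x, ∑ y, ∑ z, p3 μ X Y Z x y z *
          (log (p3 μ X Y Z x y z) + log (p1 μ Z z)
            - log (p2 μ X Z x z) - log (p2 μ Y Z y z)) :=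
      Finset.sum_le_sum fun x _ => Finset.sum_le_sum fun y _ =>
        Finset.sum_le_sum fun z _ => pointwise x y z
    have heq : ∑ x, ∑ y, ∑ z,
        (p3 μ X Y Z x y z - p2 μ X Z x z * p2 μ Y Z y z / p1 μ Z z) = 0 := by
      simp only [Finset.sum_sub_distrib]
      rw [hsum1, hsum2]; ring
    linarith
  rw [key]; exact lower

end CMI

section Algebra

variable {𝒳 𝒴 𝒵 𝒲 : Type*} {μ : Measure Ω}

/-- Symmetry of conditional mutual information. -/
lemma cmi_comm (X : Ω → 𝒳) (Y : Ω → 𝒴) (Z : Ω → 𝒵) : cmi μ X Y Z = cmi μ Y X Z := by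
  have h : ent μ (pair (pair X Y) Z) = ent μ (pair (pair Y X) Z) :=
    ent_congr (fun w => ((w.1.2, w.1.1), w.2)) (fun w => ((w.1.2, w.1.1), w.2))
      (fun ω => rfl) (fun ω => rfl)
  rw [cmi, cmi, h]; ring

/-- Chain rule identity for conditional mutual information. -/
lemma cmi_chain (X : Ω → 𝒳) (W : Ω → 𝒲) (Y : Ω → 𝒴) (Z : Ω → 𝒵) :
    cmi μ (pair X W) Y Z = cmi μ W Y Z + cmi μ X Y (pair W Z) := by
  have e1 : ent μ (pair X (pair W Z)) = ent μ (pair (pair X W) Z) :=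
    ent_congr (fun w => ((w.1, w.2.1), w.2.2)) (fun w => (w.1.1, (w.1.2, w.2)))
      (fun ω => rfl) (fun ω => rfl)
  have e2 : ent μ (pair Y (pair W Z)) = ent μ (pair (pair W Y) Z) :=
    ent_congr (fun w => ((w.2.1, w.1), w.2.2)) (fun w => (w.1.2, (w.1.1, w.2)))
      (fun ω => rfl) (fun ω => rfl)
  have e3 : ent μ (pair (pair X Y) (pair W Z)) = ent μ (pair (pair (pair X W) Y) Z) :=
    ent_congr (fun w => (((w.1.1, w.2.1), w.1.2), w.2.2))
      (fun w => ((w.1.1.1, w.1.2), (w.1.1.2, w.2))) (fun ω => rfl) (fun ω => rfl)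
  rw [cmi, cmi, cmi, e1, e2, e3]; ring

/-- Swapping the components of a pair in the first slot of `cmi`. -/
lemma cmi_pair_comm_fst (X : Ω → 𝒳) (W : Ω → 𝒲) (Y : Ω → 𝒴) (Z : Ω → 𝒵) :
    cmi μ (pair X W) Y Z = cmi μ (pair W X) Y Z := by
  have e1 : ent μ (pair (pair X W) Z) = ent μ (pair (pair W X) Z) :=
    ent_congr (fun w => ((w.1.2, w.1.1), w.2)) (fun w => ((w.1.2, w.1.1), w.2))
      (fun ω => rfl) (fun ω => rfl)
  have e2 : ent μ (pair (pair (pair X W) Y) Z) = ent μ (pair (pair (pair W X) Y) Z) :=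
    ent_congr (fun w => (((w.1.1.2, w.1.1.1), w.1.2), w.2))
      (fun w => (((w.1.1.2, w.1.1.1), w.1.2), w.2)) (fun ω => rfl) (fun ω => rfl)
  rw [cmi, cmi, e1, e2]

/-- A deterministic function of `X` can be dropped from the first slot. -/
lemma cmi_pair_comp_fst (X : Ω → 𝒳) (f : 𝒳 → 𝒲) (Y : Ω → 𝒴) (Z : Ω → 𝒵) :
    cmi μ (pair X (fun ω => f (X ω))) Y Z = cmi μ X Y Z := by
  have e1 : ent μ (pair (pair X (fun ω => f (X ω))) Z) = ent μ (pair X Z) :=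
    ent_congr (fun w => (w.1.1, w.2)) (fun w => ((w.1, f w.1), w.2))
      (fun ω => rfl) (fun ω => rfl)
  have e2 : ent μ (pair (pair (pair X (fun ω => f (X ω))) Y) Z)
      = ent μ (pair (pair X Y) Z) :=
    ent_congr (fun w => ((w.1.1.1, w.1.2), w.2))
      (fun w => (((w.1.1, f w.1.1), w.1.2), w.2)) (fun ω => rfl) (fun ω => rfl)
  rw [cmi, cmi, e1, e2]

/-- A deterministic function of the conditioning variable can be dropped. -/
lemma cmi_pair_comp_cond (X : Ω → 𝒳) (Y : Ω → 𝒴) (W : Ω → 𝒲) (f : 𝒲 → 𝒵) :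
    cmi μ X Y (pair W (fun ω => f (W ω))) = cmi μ X Y W := by
  have e1 : ent μ (pair X (pair W (fun ω => f (W ω)))) = ent μ (pair X W) :=
    ent_congr (fun w => (w.1, w.2.1)) (fun w => (w.1, (w.2, f w.2)))
      (fun ω => rfl) (fun ω => rfl)
  have e2 : ent μ (pair Y (pair W (fun ω => f (W ω)))) = ent μ (pair Y W) :=
    ent_congr (fun w => (w.1, w.2.1)) (fun w => (w.1, (w.2, f w.2)))
      (fun ω => rfl) (fun ω => rfl)
  have e3 : ent μ (pair (pair X Y) (pair W (fun ω => f (W ω))))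
      = ent μ (pair (pair X Y) W) :=
    ent_congr (fun w => (w.1, w.2.1)) (fun w => (w.1, (w.2, f w.2)))
      (fun ω => rfl) (fun ω => rfl)
  have e4 : ent μ (pair W (fun ω => f (W ω))) = ent μ W :=
    ent_congr (fun w => w.1) (fun w => (w, f w)) (fun ω => rfl) (fun ω => rfl)
  rw [cmi, cmi, e1, e2, e3, e4]

end Algebra

/-- If `(R,S)` is trivial and `I[R;ψ∘S|φ∘R] + I[S;φ∘R|ψ∘S] ≤ δ`, then there is a
finite-valued `Z` with `I[φ∘R;ψ∘S|Z] = 0` and `I[Z;φ∘R|ψ∘S] + I[Z;ψ∘S|φ∘R] ≤ δ`. -/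
theorem stmt10 {Ω : Type*} [MeasurableSpace Ω] (μ : Measure Ω) [IsProbabilityMeasure μ]
    {𝓡 𝓢 𝒳 𝒴 : Type} [Fintype 𝓡] [Fintype 𝓢] [Fintype 𝒳] [Fintype 𝒴]
    [Nonempty 𝓡] [Nonempty 𝓢] [Nonempty 𝒳] [Nonempty 𝒴]
    (R : Ω → 𝓡) (S : Ω → 𝓢) (hR : DiscreteRV R) (hS : DiscreteRV S)
    (htriv : IsTrivialPair μ R S) (φ : 𝓡 → 𝒳) (ψ : 𝓢 → 𝒴) (δ : ℝ) (hδ : 0 ≤ δ)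
    (hleak : cmi μ R (fun ω => ψ (S ω)) (fun ω => φ (R ω)) +
      cmi μ S (fun ω => φ (R ω)) (fun ω => ψ (S ω)) ≤ δ) :
    ∃ (𝒵 : Type) (_ : Fintype 𝒵) (Z : Ω → 𝒵), DiscreteRV Z ∧
      cmi μ (fun ω => φ (R ω)) (fun ω => ψ (S ω)) Z = 0 ∧
      cmi μ Z (fun ω => φ (R ω)) (fun ω => ψ (S ω)) +
        cmi μ Z (fun ω => ψ (S ω)) (fun ω => φ (R ω)) ≤ δ := by
  obtain ⟨𝒵, inst𝒵, Z, hZ, h1, h2, h3⟩ := htriv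
  set X' : Ω → 𝒳 := fun ω => φ (R ω) with hX'def
  set Y' : Ω → 𝒴 := fun ω => ψ (S ω) with hY'def
  have hX' : DiscreteRV X' := hR.comp φ
  have hY' : DiscreteRV Y' := hS.comp ψ
  -- Goal 1 : cmi μ X' Y' Z = 0
  have hX'SZ : cmi μ X' S Z = 0 := by
    have a1 : cmi μ (pair R X') S Z = cmi μ X' S Z + cmi μ R S (pair X' Z) :=
      cmi_chain R X' S Z
    have a2 : cmi μ (pair R X') S Z = cmi μ R S Z := cmi_pair_comp_fst R φ S Z
    have a3 : 0 ≤ cmi μ R S (pair X' Z) := cmi_nonneg hR hS (hX'.pair' hZ)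
    have a4 : 0 ≤ cmi μ X' S Z := cmi_nonneg hX' hS hZ
    linarith [a1, a2, a3, a4, h1.le, h1.ge]
  have hgoal1 : cmi μ X' Y' Z = 0 := by
    have b1 : cmi μ (pair S Y') X' Z = cmi μ Y' X' Z + cmi μ S X' (pair Y' Z) :=
      cmi_chain S Y' X' Z
    have b2 : cmi μ (pair S Y') X' Z = cmi μ S X' Z := cmi_pair_comp_fst S ψ X' Z
    have b3 : cmi μ S X' Z = cmi μ X' S Z := cmi_comm S X' Z
    have b4 : 0 ≤ cmi μ S X' (pair Y' Z) := cmi_nonneg hS hX' (hY'.pair' hZ)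
    have b5 : 0 ≤ cmi μ Y' X' Z := cmi_nonneg hY' hX' hZ
    have b6 : cmi μ Y' X' Z = 0 := by linarith
    rw [cmi_comm X' Y' Z, b6]
  -- Goal 2a : cmi μ Z X' Y' ≤ cmi μ S X' Y'
  have hZX'S : cmi μ Z X' S = 0 := by
    have d1 : cmi μ (pair R X') Z S = cmi μ X' Z S + cmi μ R Z (pair X' S) :=
      cmi_chain R X' Z S
    have d2 : cmi μ (pair R X') Z S = cmi μ R Z S := cmi_pair_comp_fst R φ Z S
    have d3 : cmi μ R Z S = cmi μ Z R S := cmi_comm R Z S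
    have d4 : 0 ≤ cmi μ R Z (pair X' S) := cmi_nonneg hR hZ (hX'.pair' hS)
    have d5 : 0 ≤ cmi μ X' Z S := cmi_nonneg hX' hZ hS
    have d6 : cmi μ X' Z S = 0 := by linarith
    rw [cmi_comm Z X' S, d6]
  have hgoal2a : cmi μ Z X' Y' ≤ cmi μ S X' Y' := by
    have c1 : cmi μ (pair S Z) X' Y' = cmi μ Z X' Y' + cmi μ S X' (pair Z Y') :=
      cmi_chain S Z X' Y'
    have c2 : cmi μ (pair Z S) X' Y' = cmi μ S X' Y' + cmi μ Z X' (pair S Y') :=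
      cmi_chain Z S X' Y'
    have c3 : cmi μ (pair S Z) X' Y' = cmi μ (pair Z S) X' Y' :=
      cmi_pair_comm_fst S Z X' Y'
    have c4 : cmi μ Z X' (pair S Y') = cmi μ Z X' S := cmi_pair_comp_cond Z X' S ψ
    have c6 : 0 ≤ cmi μ S X' (pair Z Y') := cmi_nonneg hS hX' (hZ.pair' hY')
    linarith [hZX'S]
  -- Goal 2b : cmi μ Z Y' X' ≤ cmi μ R Y' X'
  have hZY'R : cmi μ Z Y' R = 0 := by
    have d1 : cmi μ (pair S Y') Z R = cmi μ Y' Z R + cmi μ S Z (pair Y' R) :=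
      cmi_chain S Y' Z R
    have d2 : cmi μ (pair S Y') Z R = cmi μ S Z R := cmi_pair_comp_fst S ψ Z R
    have d3 : cmi μ S Z R = cmi μ Z S R := cmi_comm S Z R
    have d4 : 0 ≤ cmi μ S Z (pair Y' R) := cmi_nonneg hS hZ (hY'.pair' hR)
    have d5 : 0 ≤ cmi μ Y' Z R := cmi_nonneg hY' hZ hR
    have d6 : cmi μ Y' Z R = 0 := by linarith
    rw [cmi_comm Z Y' R, d6]
  have hgoal2b : cmi μ Z Y' X' ≤ cmi μ R Y' X' := by
    have c1 : cmi μ (pair R Z) Y' X' = cmi μ Z Y' X' + cmi μ R Y' (pair Z X') :=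
      cmi_chain R Z Y' X'
    have c2 : cmi μ (pair Z R) Y' X' = cmi μ R Y' X' + cmi μ Z Y' (pair R X') :=
      cmi_chain Z R Y' X'
    have c3 : cmi μ (pair R Z) Y' X' = cmi μ (pair Z R) Y' X' :=
      cmi_pair_comm_fst R Z Y' X'
    have c4 : cmi μ Z Y' (pair R X') = cmi μ Z Y' R := cmi_pair_comp_cond Z Y' R φ
    have c6 : 0 ≤ cmi μ R Y' (pair Z X') := cmi_nonneg hR hY' (hZ.pair' hX')
    linarith [hZY'R]
  exact ⟨𝒵, inst𝒵, Z, hZ, hgoal1, by linarith⟩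

end SecureComputation
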